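/- Let ◁ be an inductively generated basic cover on a set A = B/R arising from a quotient of B by an equivalence relation R, with axiom set I : A → Type, C : (a : A) → I a → Set A. Define a new axiom set on B by I^R(b) = I([b]) ⊕ {y : B // R b y} and C^R(b, inl j) = {x ∈ B | [x] ∈ C([b], j)}, C^R(b, inr ⟨y, _⟩) = {y}. Then for every subset W ⊆ B/R that is a fixpoint of the cover ◁_{I,C}, the subset es(W) = {b ∈ B | [b] ∈ W} is a fixpoint of the cover ◁^R generated on B by (I^R, C^R). -/
import Mathlib

inductive Cover {A : Type*} (I : A → Type*) (C : ∀ a, I a → Set A) (V : Set A) : A → Prop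
  | rf {a : A} : a ∈ V → Cover I C V a
  | tr {a : A} (i : I a) : (∀ y ∈ C a i, Cover I C V y) → Cover I C V a

theorem stmt6.{u, v} {B : Type u} (sR : Setoid B)
    (I : Quotient sR → Type v) (C : ∀ a, I a → Set (Quotient sR))
    (IR : B → Type (max u v)) (hIR : ∀ b, IR b = (I ⟦b⟧ ⊕ {y : B // sR.r b y}))
    (CR : ∀ b, IR b → Set B)
    (hCR : ∀ b j, CR b j =
      Sum.elim (fun j : I ⟦b⟧ => {x : B | (⟦x⟧ : Quotient sR) ∈ C ⟦b⟧ j})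
               (fun y : {y : B // sR.r b y} => {y.1}) (cast (hIR b) j))
    (W : Set (Quotient sR)) (hW : {z | Cover I C W z} = W) :
    {x | Cover IR CR {b : B | (⟦b⟧ : Quotient sR) ∈ W} x} = {b : B | (⟦b⟧ : Quotient sR) ∈ W} := by
  ext x
  simp only [Set.mem_setOf_eq]
  constructor
  · intro h
    induction h with
    | rf h => exact h
    | @tr a i h ih =>
      rcases hc : cast (hIR a) i with j | ⟨y, hy⟩
      · rw [← hW]
        refine Cover.tr j ?_
        intro z hz
        obtain ⟨y, rfl⟩ := Quotient.exists_rep z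
        refine Cover.rf (ih y ?_)
        rw [hCR, hc]
        exact hz
      · have h1 := ih y (by rw [hCR, hc]; exact rfl)
        rwa [show (⟦a⟧ : Quotient sR) = ⟦y⟧ from Quotient.sound hy]
  · exact fun h => Cover.rf h
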